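/- Let (x̄,ū) be a W^{1,1} local minimizer for (FP3) and let [τ1,τ2] ⊆ [t0,T] with τ1 < τ2 be such that −1 < x̄(t) < 1 for all t ∈ (τ1,τ2). If x̄(τ1) = x̄(τ2) = −1, then τ2 − τ1 < 4/a and, with t̂ := (τ1+τ2)/2, one has x̄(t) = −1 + a(t − τ1) for t ∈ [τ1, t̂] and x̄(t) = −1 − a(t − τ2) for t ∈ (t̂, τ2]. -/

import Mathlib

open MeasureTheory Set

noncomputable section

/-- A feasible process for problem (FP3): `x` is the (absolutely continuous) state
trajectory, represented as the indefinite integral of its a.e. derivative `-a*u`,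
`u` is a measurable control with values in `[-1,1]` a.e., the initial condition is
`x t0 = x0`, and the bilateral state constraint `-1 ≤ x t ≤ 1` holds on `[t0,T]`. -/
def FP3Feasible (a t0 T x0 : ℝ) (x u : ℝ → ℝ) : Prop :=
  AEStronglyMeasurable u (volume.restrict (Icc t0 T)) ∧
  (∀ᵐ t ∂(volume.restrict (Icc t0 T)), u t ∈ Icc (-1 : ℝ) 1) ∧
  (∀ t ∈ Icc t0 T, x t = x0 + ∫ s in t0..t, -(a * u s)) ∧
  (∀ t ∈ Icc t0 T, x t ∈ Icc (-1 : ℝ) 1)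

/-- The cost functional of (FP3) on the interval `[t1,t2]`. -/
def FP3Cost (lam t1 t2 : ℝ) (x u : ℝ → ℝ) : ℝ :=
  ∫ t in t1..t2, -(Real.exp (-(lam * t)) * (x t + u t))

/-- `(x,u)` is a `W^{1,1}` local minimizer of (FP3). -/
def FP3LocalMin (a lam t0 T x0 : ℝ) (x u : ℝ → ℝ) : Prop :=
  FP3Feasible a t0 T x0 x u ∧
  ∃ δ > (0 : ℝ), ∀ y v, FP3Feasible a t0 T x0 y v →
    (∫ t in t0..T, |(-(a * v t)) - (-(a * u t))|) ≤ δ →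
    FP3Cost lam t0 T x u ≤ FP3Cost lam t0 T y v

/-- `(x,u)` is a `W^{1,1}` global minimizer of (FP3). -/
def FP3GlobalMin (a lam t0 T x0 : ℝ) (x u : ℝ → ℝ) : Prop :=
  FP3Feasible a t0 T x0 x u ∧
  ∀ y v, FP3Feasible a t0 T x0 y v → FP3Cost lam t0 T x u ≤ FP3Cost lam t0 T y v

/-- The function `Δ(t1,t2) = e^{-λ t1} - 2 e^{-λ (t1+t2)/2} + e^{-λ t2}`. -/
def FP3Delta (lam t1 t2 : ℝ) : ℝ :=
  Real.exp (-(lam * t1)) - 2 * Real.exp (-(lam * (t1 + t2) / 2)) + Real.exp (-(lam * t2))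

/-- The characteristic constant `ρ = (1/λ) ln (a/(a-λ))` of (FP3). -/
def FP3rho (a lam : ℝ) : ℝ := (1 / lam) * Real.log (a / (a - lam))

/-- If a local minimizer's trajectory stays in `(-1,1)` on `(τ1,τ2)`
and equals `-1` at both endpoints, then `τ2 - τ1 < 4/a` and the trajectory is the
tent with peak at the midpoint. -/
lemma exp_int (lam : ℝ) (hlam : 0 < lam) (b c : ℝ) :
    ∫ t in b..c, Real.exp (-(lam * t)) =
      (Real.exp (-(lam * b)) - Real.exp (-(lam * c))) / lam := by
  have h : ∀ t ∈ Set.uIcc b c, HasDerivAt (fun t => -Real.exp (-(lam * t)) / lam)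
      (Real.exp (-(lam * t))) t := by
    intro t _
    have h1 : HasDerivAt (fun t : ℝ => -(lam * t)) (-lam) t := by
      have := ((hasDerivAt_id t).const_mul lam).neg; simp only [id, mul_one] at this; exact this
    have h2 := (Real.hasDerivAt_exp (-(lam * t))).comp t h1
    have h3 := (h2.neg).div_const lam
    exact h3.congr_deriv (by rw [mul_neg, neg_neg, mul_div_assoc, div_self hlam.ne', mul_one])
  rw [intervalIntegral.integral_eq_sub_of_hasDerivAt h
    ((Real.continuous_exp.comp (by continuity)).intervalIntegrable b c)]
  ring

lemma fubini_aux (lam τ1 τ2 : ℝ) (hlam : 0 < lam) (h12 : τ1 ≤ τ2) (d : ℝ → ℝ)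
    (hd : IntegrableOn d (Icc τ1 τ2)) :
    ∫ t in τ1..τ2, Real.exp (-(lam*t)) * (∫ s in τ1..t, d s) =
    ∫ s in τ1..τ2, d s * ((Real.exp (-(lam*s)) - Real.exp (-(lam*τ2)))/lam) := by
  set e : ℝ → ℝ := fun t => Real.exp (-(lam*t)) with he
  set μ := volume.restrict (Icc τ1 τ2) with hμ
  set F : ℝ → ℝ → ℝ := fun s t => ({p : ℝ × ℝ | p.1 ≤ p.2}).indicator
      (fun p => d p.1 * e p.2) (s, t) with hF
  have hmeas : MeasurableSet {p : ℝ × ℝ | p.1 ≤ p.2} :=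
    (isClosed_le continuous_fst continuous_snd).measurableSet
  have hbase : Integrable (fun p : ℝ × ℝ => d p.1 * e p.2) (μ.prod μ) := by
    apply Integrable.mul_prod hd
    exact (Real.continuous_exp.comp (by continuity)).continuousOn.integrableOn_compact
      isCompact_Icc
  have hint : Integrable (Function.uncurry F) (μ.prod μ) := by
    have : Function.uncurry F = ({p : ℝ × ℝ | p.1 ≤ p.2}).indicator
        (fun p => d p.1 * e p.2) := rfl
    rw [this]
    exact hbase.indicator hmeas
  have hswap := MeasureTheory.integral_integral_swap (f := F) hint
  have hL : ∀ s ∈ Icc τ1 τ2, (∫ t, F s t ∂μ) = d s * ((e s - e τ2)/lam) := by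
    intro s hs
    have h1 : (fun t => F s t) = (Ici s).indicator (fun t => d s * e t) := by
      funext t
      simp only [hF, Set.indicator_apply, Set.mem_setOf_eq, Set.mem_Ici]
    rw [h1, integral_indicator measurableSet_Ici, hμ,
      Measure.restrict_restrict measurableSet_Ici]
    have h2 : Ici s ∩ Icc τ1 τ2 = Icc s τ2 := by
      ext t; simp only [mem_inter_iff, mem_Ici, mem_Icc]
      constructor
      · rintro ⟨h, _, h'⟩; exact ⟨h, h'⟩
      · rintro ⟨h, h'⟩; exact ⟨h, hs.1.trans h, h'⟩
    rw [h2, MeasureTheory.integral_Icc_eq_integral_Ioc,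
      ← intervalIntegral.integral_of_le hs.2, intervalIntegral.integral_const_mul,
      exp_int lam hlam s τ2]
  have hR : ∀ t ∈ Icc τ1 τ2, (∫ s, F s t ∂μ) = e t * (∫ s in τ1..t, d s) := by
    intro t ht
    have h1 : (fun s => F s t) = (Iic t).indicator (fun s => d s * e t) := by
      funext s
      simp only [hF, Set.indicator_apply, Set.mem_setOf_eq, Set.mem_Iic]
    rw [h1, integral_indicator measurableSet_Iic, hμ,
      Measure.restrict_restrict measurableSet_Iic]
    have h2 : Iic t ∩ Icc τ1 τ2 = Icc τ1 t := by
      ext s; simp only [mem_inter_iff, mem_Iic, mem_Icc]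
      constructor
      · rintro ⟨h, h', _⟩; exact ⟨h', h⟩
      · rintro ⟨h, h'⟩; exact ⟨h', h, h'.trans ht.2⟩
    rw [h2, MeasureTheory.integral_Icc_eq_integral_Ioc,
      ← intervalIntegral.integral_of_le ht.1, intervalIntegral.integral_mul_const, mul_comm]
  calc ∫ t in τ1..τ2, e t * (∫ s in τ1..t, d s)
      = ∫ t in Icc τ1 τ2, e t * (∫ s in τ1..t, d s) := by
        rw [MeasureTheory.integral_Icc_eq_integral_Ioc, intervalIntegral.integral_of_le h12]
    _ = ∫ t, (∫ s, F s t ∂μ) ∂μ := by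
        refine (setIntegral_congr_fun measurableSet_Icc ?_).symm
        intro t ht; exact hR t ht
    _ = ∫ s, (∫ t, F s t ∂μ) ∂μ := hswap.symm
    _ = ∫ s in Icc τ1 τ2, d s * ((e s - e τ2)/lam) := by
        refine setIntegral_congr_fun measurableSet_Icc ?_
        intro s hs; exact hL s hs
    _ = ∫ s in τ1..τ2, d s * ((e s - e τ2)/lam) := by
        rw [MeasureTheory.integral_Icc_eq_integral_Ioc, intervalIntegral.integral_of_le h12]

lemma primitive_repr (t0 T x0 : ℝ) (f x : ℝ → ℝ) (hf : IntegrableOn f (Icc t0 T))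
    (hx : ∀ t ∈ Icc t0 T, x t = x0 + ∫ s in t0..t, f s) :
    ∃ Q : ℝ → ℝ, Continuous Q ∧ ∀ t ∈ Icc t0 T, x t = Q t := by
  set f' := (Icc t0 T).indicator f with hf'
  have hint : Integrable f' volume := (integrable_indicator_iff measurableSet_Icc).2 hf
  refine ⟨fun t => x0 + ∫ s in t0..t, f' s, ?_, ?_⟩
  · exact continuous_const.add
      (intervalIntegral.continuous_primitive (fun a b => hint.intervalIntegrable) t0)
  · intro t ht
    rw [hx t ht]
    congr 1
    refine intervalIntegral.integral_congr (fun s hs => ?_)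
    have : s ∈ Icc t0 T := by
      rcases le_total t0 t with h | h
      · rw [uIcc_of_le h] at hs; exact ⟨hs.1, hs.2.trans ht.2⟩
      · rw [uIcc_of_ge h] at hs; exact ⟨ht.1.trans hs.1, hs.2.trans (ht.1.trans ht.2)⟩
    exact (Set.indicator_of_mem this f).symm

lemma int_le_const {f : ℝ → ℝ} {α β C : ℝ} (hab : α ≤ β)
    (hf : IntegrableOn f (Ioc α β))
    (h : ∀ᵐ s ∂(volume.restrict (Ioc α β)), f s ≤ C) :
    ∫ s in α..β, f s ≤ C * (β - α) := by
  rw [intervalIntegral.integral_of_le hab]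
  calc ∫ s in Ioc α β, f s ≤ ∫ _s in Ioc α β, C :=
        integral_mono_ae hf (integrable_const C) h
    _ = C * (β - α) := by
        rw [setIntegral_const, Real.volume_real_Ioc_of_le hab]
        rw [smul_eq_mul, mul_comm]

lemma const_on_int {v : ℝ → ℝ} {α β k c : ℝ} (hab : α ≤ β)
    (h : ∀ s ∈ Ioc α β, v s = k) :
    ∫ s in α..β, -(c * v s) = -(c * k) * (β - α) := by
  rw [intervalIntegral.integral_of_le hab,
    setIntegral_congr_fun measurableSet_Ioc (g := fun _ => -(c*k)) (fun s hs => by rw [h s hs]),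
    setIntegral_const, Real.volume_real_Ioc_of_le hab, smul_eq_mul,
    mul_comm]

lemma zero_of_integral_zero {W : ℝ → ℝ} (hW : Continuous W) {α β : ℝ} (hab : α ≤ β)
    (hnn : ∀ t ∈ Icc α β, 0 ≤ W t) (hz : ∫ t in α..β, W t = 0) :
    ∀ t ∈ Ioo α β, W t = 0 := by
  intro t ht
  by_contra hne
  have hpos : 0 < volume (Function.support W ∩ Ioc α β) := by
    have hopen : IsOpen (Function.support W ∩ Ioo α β) :=
      (isOpen_ne.preimage hW).inter isOpen_Ioo
    have hsub : Function.support W ∩ Ioo α β ⊆ Function.support W ∩ Ioc α β :=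
      inter_subset_inter_right _ Ioo_subset_Ioc_self
    calc (0:ENNReal) < volume (Function.support W ∩ Ioo α β) :=
          hopen.measure_pos volume ⟨t, hne, ht⟩
      _ ≤ _ := measure_mono hsub
  have hae : 0 ≤ᵐ[volume.restrict (Ioc α β)] W := by
    filter_upwards [ae_restrict_mem measurableSet_Ioc] with s hs
    exact hnn s ⟨le_of_lt hs.1, hs.2⟩
  have hi : IntegrableOn W (Ioc α β) :=
    hW.continuousOn.integrableOn_compact isCompact_Icc |>.mono_set Ioc_subset_Icc_self
  have := (setIntegral_pos_iff_support_of_nonneg_ae hae hi).2 hpos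
  rw [← intervalIntegral.integral_of_le hab, hz] at this
  exact lt_irrefl 0 this
theorem fp3_statement_S3
    (a lam t0 T x0 : ℝ) (hal : lam < a) (hlam : 0 < lam)
    (ht0 : 0 ≤ t0) (htT : t0 < T) (hx0 : x0 ∈ Icc (-1 : ℝ) 1)
    (xb ub : ℝ → ℝ) (hmin : FP3LocalMin a lam t0 T x0 xb ub)
    (τ1 τ2 : ℝ) (h1 : t0 ≤ τ1) (h12 : τ1 < τ2) (h2 : τ2 ≤ T)
    (hin : ∀ t ∈ Ioo τ1 τ2, xb t ∈ Ioo (-1 : ℝ) 1)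
    (ha1 : xb τ1 = -1) (ha2 : xb τ2 = -1) :
    τ2 - τ1 < 4 / a ∧
    (∀ t ∈ Icc τ1 ((τ1 + τ2) / 2), xb t = -1 + a * (t - τ1)) ∧
    (∀ t ∈ Ioc ((τ1 + τ2) / 2) τ2, xb t = -1 - a * (t - τ2)) := by
  obtain ⟨⟨hu_meas, hu_bd, hx_eq, hx_bd⟩, δ, hδ, hopt⟩ := hmin
  have ha : 0 < a := hlam.trans hal
  have hτ1 : τ1 ∈ Icc t0 T := ⟨h1, h12.le.trans h2⟩
  have hτ2 : τ2 ∈ Icc t0 T := ⟨h1.trans h12.le, h2⟩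
  set L := τ2 - τ1 with hL
  have hL0 : 0 < L := by simp only [hL]; linarith
  set c := min (L/2) (2/a) with hc
  have hc0 : 0 < c := lt_min (by linarith) (by positivity)
  have hc2 : c ≤ 2/a := min_le_right _ _
  have hcL : c ≤ L/2 := min_le_left _ _
  set s1 := τ1 + c with hs1
  set s2 := τ2 - c with hs2
  have hs1s2 : s1 ≤ s2 := by simp only [hs1, hs2]; linarith
  have h1s1 : τ1 < s1 := by simp only [hs1]; linarith
  have hs2τ2 : s2 < τ2 := by simp only [hs2]; linarith
  have hs1τ2 : s1 ≤ τ2 := hs1s2.trans hs2τ2.le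
  have hτ1s2 : τ1 ≤ s2 := h1s1.le.trans hs1s2
  have hs1I : s1 ∈ Icc t0 T := ⟨h1.trans h1s1.le, hs1τ2.trans h2⟩
  have hs2I : s2 ∈ Icc t0 T := ⟨h1.trans hτ1s2, hs2τ2.le.trans h2⟩
  set v : ℝ → ℝ := fun t => if t ≤ τ1 ∨ τ2 < t then ub t
      else if t ≤ s1 then -1 else if t ≤ s2 then 0 else 1 with hv
  -- measurability of v
  have hA : MeasurableSet {t : ℝ | t ≤ τ1 ∨ τ2 < t} := by
    have : {t : ℝ | t ≤ τ1 ∨ τ2 < t} = Iic τ1 ∪ Ioi τ2 := rfl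
    rw [this]; exact measurableSet_Iic.union measurableSet_Ioi
  have hw_meas : StronglyMeasurable
      (fun t : ℝ => if t ≤ s1 then (-1:ℝ) else if t ≤ s2 then 0 else 1) := by
    apply Measurable.stronglyMeasurable
    exact Measurable.ite measurableSet_Iic measurable_const
      (Measurable.ite measurableSet_Iic measurable_const measurable_const)
  have hv_meas : AEStronglyMeasurable v (volume.restrict (Icc t0 T)) := by
    have hveq : v = fun t => ({t : ℝ | t ≤ τ1 ∨ τ2 < t}).indicator ub t
        + ({t : ℝ | t ≤ τ1 ∨ τ2 < t}ᶜ).indicator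
          (fun t => if t ≤ s1 then (-1:ℝ) else if t ≤ s2 then 0 else 1) t := by
      funext t
      by_cases h : t ≤ τ1 ∨ τ2 < t <;>
        simp [hv, Set.indicator_apply, h]
    rw [hveq]
    exact (hu_meas.indicator hA).add
      (hw_meas.aestronglyMeasurable.indicator hA.compl)
  have hv_bd : ∀ᵐ t ∂(volume.restrict (Icc t0 T)), v t ∈ Icc (-1:ℝ) 1 := by
    filter_upwards [hu_bd] with t htu
    by_cases h : t ≤ τ1 ∨ τ2 < t
    · simp only [hv, if_pos h]; exact htu
    · simp only [hv, if_neg h]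
      split_ifs <;> constructor <;> norm_num
  -- integrability
  have hfin : IsFiniteMeasure (volume.restrict (Icc t0 T)) :=
    ⟨by rw [Measure.restrict_apply_univ]; exact measure_Icc_lt_top⟩
  have hub_int : IntegrableOn ub (Icc t0 T) := by
    refine Integrable.mono' (integrable_const 1) hu_meas ?_
    filter_upwards [hu_bd] with t ht
    rw [Real.norm_eq_abs, abs_le]; exact ⟨ht.1, ht.2⟩
  have hv_int : IntegrableOn v (Icc t0 T) := by
    refine Integrable.mono' (integrable_const 1) hv_meas ?_
    filter_upwards [hv_bd] with t ht
    rw [Real.norm_eq_abs, abs_le]; exact ⟨ht.1, ht.2⟩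
  have hgub : IntegrableOn (fun s => -(a * ub s)) (Icc t0 T) := (hub_int.const_mul a).neg
  have hgv : IntegrableOn (fun s => -(a * v s)) (Icc t0 T) := (hv_int.const_mul a).neg
  have hIIon : ∀ (f : ℝ → ℝ), IntegrableOn f (Icc t0 T) → ∀ {α β : ℝ},
      α ∈ Icc t0 T → β ∈ Icc t0 T → IntervalIntegrable f volume α β := by
    intro f hf α β hα hβ
    exact (hf.mono_set (uIcc_subset_Icc hα hβ)).intervalIntegrable
  set z : ℝ → ℝ := fun t => x0 + ∫ s in t0..t, -(a * v s) with hz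
  have hIt0 : t0 ∈ Icc t0 T := ⟨le_refl _, htT.le⟩
  -- z = xb on [t0, τ1]
  have hz1 : ∀ t ∈ Icc t0 τ1, z t = xb t := by
    intro t ht
    have htI : t ∈ Icc t0 T := ⟨ht.1, ht.2.trans hτ1.2⟩
    rw [hz, hx_eq t htI]
    simp only
    congr 1
    refine intervalIntegral.integral_congr (fun s hs => ?_)
    rw [uIcc_of_le ht.1] at hs
    have hsτ1 : s ≤ τ1 := hs.2.trans ht.2
    simp only [hv, if_pos (Or.inl hsτ1)]
  have hzτ1 : z τ1 = -1 := by rw [hz1 τ1 ⟨h1, le_refl _⟩, ha1]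
  have hz_add : ∀ α β : ℝ, α ∈ Icc t0 T → β ∈ Icc t0 T →
      z β = z α + ∫ s in α..β, -(a * v s) := by
    intro α β hα hβ
    simp only [hz]
    rw [← intervalIntegral.integral_add_adjacent_intervals
      (hIIon _ hgv hIt0 hα) (hIIon _ hgv hα hβ)]
    ring
  have hz_up : ∀ t ∈ Icc τ1 s1, z t = -1 + a * (t - τ1) := by
    intro t ht
    have htI : t ∈ Icc t0 T := ⟨h1.trans ht.1, ht.2.trans hs1I.2⟩
    have hvs : ∀ s ∈ Ioc τ1 t, v s = -1 := by
      intro s hs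
      have hne : ¬(s ≤ τ1 ∨ τ2 < s) := by
        push_neg
        exact ⟨hs.1, (hs.2.trans ht.2).trans hs1τ2⟩
      simp only [hv, if_neg hne, if_pos (hs.2.trans ht.2)]
    rw [hz_add τ1 t hτ1 htI, hzτ1, const_on_int ht.1 hvs]
    ring
  have hzs1 : z s1 = -1 + a * c := by
    rw [hz_up s1 ⟨h1s1.le, le_refl _⟩]; simp only [hs1]; ring
  have hz_flat : ∀ t ∈ Icc s1 s2, z t = -1 + a * c := by
    intro t ht
    have htI : t ∈ Icc t0 T := ⟨hs1I.1.trans ht.1, ht.2.trans hs2I.2⟩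
    have hvs : ∀ s ∈ Ioc s1 t, v s = 0 := by
      intro s hs
      have hsτ2 : s ≤ τ2 := (hs.2.trans ht.2).trans hs2τ2.le
      have hne : ¬(s ≤ τ1 ∨ τ2 < s) := by
        push_neg
        exact ⟨h1s1.trans hs.1, hsτ2⟩
      simp only [hv, if_neg hne, if_neg (not_le.2 hs.1), if_pos (hs.2.trans ht.2)]
    rw [hz_add s1 t hs1I htI, hzs1, const_on_int ht.1 hvs]
    ring
  have hzs2 : z s2 = -1 + a * c := hz_flat s2 ⟨hs1s2, le_refl _⟩
  have hz_down : ∀ t ∈ Icc s2 τ2, z t = -1 + a * (τ2 - t) := by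
    intro t ht
    have htI : t ∈ Icc t0 T := ⟨hs2I.1.trans ht.1, ht.2.trans h2⟩
    have hvs : ∀ s ∈ Ioc s2 t, v s = 1 := by
      intro s hs
      have hne : ¬(s ≤ τ1 ∨ τ2 < s) := by
        push_neg
        exact ⟨h1s1.trans (hs1s2.trans_lt hs.1), hs.2.trans ht.2⟩
      simp only [hv, if_neg hne, if_neg (not_le.2 ((hs1s2.trans_lt hs.1))),
        if_neg (not_le.2 hs.1)]
    rw [hz_add s2 t hs2I htI, hzs2, const_on_int ht.1 hvs]
    simp only [hs2]; ring
  have hzτ2 : z τ2 = -1 := by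
    rw [hz_down τ2 ⟨hs2τ2.le, le_refl _⟩]; ring
  have hz2 : ∀ t ∈ Icc τ2 T, z t = xb t := by
    intro t ht
    have htI : t ∈ Icc t0 T := ⟨hτ2.1.trans ht.1, ht.2⟩
    have hxbt : xb t = xb τ2 + ∫ s in τ2..t, -(a * ub s) := by
      rw [hx_eq t htI, hx_eq τ2 hτ2,
        ← intervalIntegral.integral_add_adjacent_intervals
          (hIIon _ hgub hIt0 hτ2) (hIIon _ hgub hτ2 htI)]
      ring
    rw [hz_add τ2 t hτ2 htI, hzτ2, hxbt, ha2]
    congr 1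
    rw [intervalIntegral.integral_of_le ht.1, intervalIntegral.integral_of_le ht.1]
    refine setIntegral_congr_fun measurableSet_Ioc (fun s hs => ?_)
    simp only [hv, if_pos (Or.inr hs.1)]
  -- state bounds for z
  have hacle2 : a * c ≤ 2 := by
    have h2a : a * (2/a) = 2 := by field_simp
    have := mul_le_mul_of_nonneg_left hc2 ha.le
    linarith
  have hz_mid : ∀ t ∈ Icc τ1 τ2, -1 ≤ z t ∧ z t ≤ -1 + a * c := by
    intro t ht
    rcases le_total t s1 with h | h
    · rw [hz_up t ⟨ht.1, h⟩]
      have h3 : t - τ1 ≤ c := by simp only [hs1] at h; linarith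
      have h4 : 0 ≤ a * (t - τ1) := mul_nonneg ha.le (by linarith [ht.1])
      have h5 : a * (t - τ1) ≤ a * c := mul_le_mul_of_nonneg_left h3 ha.le
      constructor <;> linarith
    · rcases le_total t s2 with h' | h'
      · rw [hz_flat t ⟨h, h'⟩]
        have h4 : 0 ≤ a * c := mul_nonneg ha.le hc0.le
        constructor <;> linarith
      · rw [hz_down t ⟨h', ht.2⟩]
        have h3 : τ2 - t ≤ c := by simp only [hs2] at h'; linarith
        have h4 : 0 ≤ a * (τ2 - t) := mul_nonneg ha.le (by linarith [ht.2])
        have h5 : a * (τ2 - t) ≤ a * c := mul_le_mul_of_nonneg_left h3 ha.le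
        constructor <;> linarith
  have hz_bd : ∀ t ∈ Icc t0 T, z t ∈ Icc (-1:ℝ) 1 := by
    intro t ht
    rcases le_total t τ1 with h | h
    · rw [hz1 t ⟨ht.1, h⟩]; exact hx_bd t ht
    · rcases le_total t τ2 with h' | h'
      · obtain ⟨hlo, hhi⟩ := hz_mid t ⟨h, h'⟩
        exact ⟨hlo, by linarith⟩
      · rw [hz2 t ⟨h', ht.2⟩]; exact hx_bd t ht
  have hfeasz : FP3Feasible a t0 T x0 z v :=
    ⟨hv_meas, hv_bd, fun t _ => by rw [hz], hz_bd⟩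
  -- Lipschitz bounds on xb
  have hae_ub : ∀ α β : ℝ, t0 ≤ α → β ≤ T →
      (∀ᵐ s ∂(volume.restrict (Ioc α β)), ub s ∈ Icc (-1:ℝ) 1) := by
    intro α β hα hβ
    exact ae_restrict_of_ae_restrict_of_subset
      (show Ioc α β ⊆ Icc t0 T from fun s hs => ⟨hα.trans hs.1.le, hs.2.trans hβ⟩) hu_bd
  have hlipA : ∀ t ∈ Icc τ1 τ2, xb t ≤ -1 + a * (t - τ1) := by
    intro t ht
    have htI : t ∈ Icc t0 T := ⟨h1.trans ht.1, ht.2.trans h2⟩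
    have hdiff : xb t - xb τ1 = ∫ s in τ1..t, -(a * ub s) := by
      rw [hx_eq t htI, hx_eq τ1 hτ1,
        ← intervalIntegral.integral_add_adjacent_intervals
          (hIIon _ hgub hIt0 hτ1) (hIIon _ hgub hτ1 htI)]
      ring
    have hb : ∫ s in τ1..t, -(a * ub s) ≤ a * (t - τ1) := by
      refine int_le_const ht.1 (hgub.mono_set
        (show Ioc τ1 t ⊆ Icc t0 T from fun s hs => ⟨h1.trans hs.1.le, hs.2.trans htI.2⟩)) ?_
      filter_upwards [hae_ub τ1 t h1 htI.2] with s hsb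
      have := mul_le_mul_of_nonneg_left hsb.1 ha.le
      linarith
    linarith [hdiff, hb, ha1.symm ▸ (by linarith : xb τ1 = xb τ1)]
  have hlipB : ∀ t ∈ Icc τ1 τ2, xb t ≤ -1 + a * (τ2 - t) := by
    intro t ht
    have htI : t ∈ Icc t0 T := ⟨h1.trans ht.1, ht.2.trans h2⟩
    have hdiff : xb τ2 - xb t = ∫ s in t..τ2, -(a * ub s) := by
      rw [hx_eq t htI, hx_eq τ2 hτ2,
        ← intervalIntegral.integral_add_adjacent_intervals
          (hIIon _ hgub hIt0 htI) (hIIon _ hgub htI hτ2)]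
      ring
    have hb : ∫ s in t..τ2, a * ub s ≤ a * (τ2 - t) := by
      have haub : IntegrableOn (fun s => a * ub s) (Icc t0 T) := hub_int.const_mul a
      refine int_le_const ht.2 (haub.mono_set
        (show Ioc t τ2 ⊆ Icc t0 T from fun s hs => ⟨htI.1.trans hs.1.le, hs.2.trans h2⟩)) ?_
      filter_upwards [hae_ub t τ2 htI.1 h2] with s hsb
      have := mul_le_mul_of_nonneg_left hsb.2 ha.le
      linarith
    have hneg : ∫ s in t..τ2, -(a * ub s) = -∫ s in t..τ2, a * ub s :=
      intervalIntegral.integral_neg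
    have := ha2 ▸ hdiff
    linarith
  have hxb_le_z : ∀ t ∈ Icc τ1 τ2, xb t ≤ z t := by
    intro t ht
    have htI : t ∈ Icc t0 T := ⟨h1.trans ht.1, ht.2.trans h2⟩
    rcases le_total t s1 with h | h
    · rw [hz_up t ⟨ht.1, h⟩]; exact hlipA t ht
    · rcases le_total t s2 with h' | h'
      · rw [hz_flat t ⟨h, h'⟩]
        rcases le_total (L/2) (2/a) with hm | hm
        · have hcv : c = L/2 := min_eq_left hm
          have htc : t - τ1 ≤ c := by
            simp only [hs2, hcv] at h' ⊢
            simp only [hL] at *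
            linarith
          have h6 := hlipA t ht
          have h7 : a * (t - τ1) ≤ a * c := mul_le_mul_of_nonneg_left htc ha.le
          linarith
        · have hcv : c = 2/a := min_eq_right hm
          have : a * c = 2 := by rw [hcv]; field_simp
          have := (hx_bd t htI).2
          linarith
      · rw [hz_down t ⟨h', ht.2⟩]; exact hlipB t ht
  -- continuous representatives
  obtain ⟨Qx, hQx_cont, hQx⟩ := primitive_repr t0 T x0 _ xb hgub hx_eq
  obtain ⟨Qz, hQz_cont, hQz⟩ := primitive_repr t0 T x0 _ z hgv (fun t _ => by rw [hz])
  have hxb_aesm : AEStronglyMeasurable xb (volume.restrict (Icc t0 T)) := by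
    refine hQx_cont.aestronglyMeasurable.congr ?_
    filter_upwards [ae_restrict_mem measurableSet_Icc] with t ht
    exact (hQx t ht).symm
  have hz_aesm : AEStronglyMeasurable z (volume.restrict (Icc t0 T)) := by
    refine hQz_cont.aestronglyMeasurable.congr ?_
    filter_upwards [ae_restrict_mem measurableSet_Icc] with t ht
    exact (hQz t ht).symm
  have hx_bd_ae : ∀ᵐ t ∂(volume.restrict (Icc t0 T)), xb t ∈ Icc (-1:ℝ) 1 := by
    filter_upwards [ae_restrict_mem measurableSet_Icc] with t ht
    exact hx_bd t ht
  have hz_bd_ae : ∀ᵐ t ∂(volume.restrict (Icc t0 T)), z t ∈ Icc (-1:ℝ) 1 := by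
    filter_upwards [ae_restrict_mem measurableSet_Icc] with t ht
    exact hz_bd t ht
  have hE_cont : Continuous (fun t : ℝ => Real.exp (-(lam * t))) :=
    Real.continuous_exp.comp ((continuous_const.mul continuous_id).neg)
  -- integrability of e * x for bounded measurable x
  have hbd_int : ∀ (x : ℝ → ℝ), AEStronglyMeasurable x (volume.restrict (Icc t0 T)) →
      (∀ᵐ t ∂(volume.restrict (Icc t0 T)), x t ∈ Icc (-1:ℝ) 1) →
      IntegrableOn (fun t => Real.exp (-(lam * t)) * x t) (Icc t0 T) := by
    intro x hxm hxb'
    refine Integrable.mono' (integrable_const (Real.exp (-(lam * t0))))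
      (hE_cont.aestronglyMeasurable.mul hxm) ?_
    filter_upwards [hxb', ae_restrict_mem measurableSet_Icc] with t hb hmem
    rw [Real.norm_eq_abs, abs_mul, abs_of_pos (Real.exp_pos _)]
    have h3 : Real.exp (-(lam*t)) ≤ Real.exp (-(lam*t0)) := by
      apply Real.exp_le_exp.2
      have := mul_le_mul_of_nonneg_left hmem.1 hlam.le
      linarith
    have h4 : |x t| ≤ 1 := abs_le.2 ⟨hb.1, hb.2⟩
    calc Real.exp (-(lam*t)) * |x t| ≤ Real.exp (-(lam*t0)) * 1 :=
          mul_le_mul h3 h4 (abs_nonneg _) (Real.exp_pos _).le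
      _ = _ := mul_one _
  have hexb := hbd_int xb hxb_aesm hx_bd_ae
  have heub := hbd_int ub hu_meas hu_bd
  have hez := hbd_int z hz_aesm hz_bd_ae
  have hev := hbd_int v hv_meas hv_bd
  have hf1_int : IntegrableOn (fun t => -(Real.exp (-(lam * t)) * (xb t + ub t))) (Icc t0 T) := by
    have heq : (fun t => -(Real.exp (-(lam * t)) * (xb t + ub t)))
        = (fun t => -(Real.exp (-(lam * t)) * xb t + Real.exp (-(lam * t)) * ub t)) :=
      funext (fun t => by ring)
    rw [heq]; exact (hexb.add heub).neg
  have hf2_int : IntegrableOn (fun t => -(Real.exp (-(lam * t)) * (z t + v t))) (Icc t0 T) := by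
    have heq : (fun t => -(Real.exp (-(lam * t)) * (z t + v t)))
        = (fun t => -(Real.exp (-(lam * t)) * z t + Real.exp (-(lam * t)) * v t)) :=
      funext (fun t => by ring)
    rw [heq]; exact (hez.add hev).neg
  -- the perturbation parameter
  set M := ∫ t in t0..T, |(-(a * v t)) - (-(a * ub t))| with hM
  have hM0 : 0 ≤ M := intervalIntegral.integral_nonneg htT.le (fun t _ => abs_nonneg _)
  set θ := min 1 (δ / (M + 1)) with hθ
  have hθ0 : 0 < θ := lt_min one_pos (by positivity)
  have hθ1 : θ ≤ 1 := min_le_left _ _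
  have hθδ : θ * M ≤ δ := by
    calc θ * M ≤ (δ/(M+1)) * M := mul_le_mul_of_nonneg_right (min_le_right _ _) hM0
      _ ≤ δ := by
          rw [div_mul_eq_mul_div, div_le_iff₀ (by linarith)]
          have : δ*M ≤ δ*(M+1) := mul_le_mul_of_nonneg_left (by linarith) hδ.le
          linarith
  set vθ : ℝ → ℝ := fun t => (1-θ) * ub t + θ * v t with hvθ
  set yθ : ℝ → ℝ := fun t => (1-θ) * xb t + θ * z t with hyθ
  have hfeasθ : FP3Feasible a t0 T x0 yθ vθ := by
    refine ⟨(hu_meas.const_mul _).add (hv_meas.const_mul _), ?_, ?_, ?_⟩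
    · filter_upwards [hu_bd, hv_bd] with t hb1 hb2
      have k1 : (1-θ)*(-1) ≤ (1-θ)*ub t := mul_le_mul_of_nonneg_left hb1.1 (by linarith)
      have k2 : θ*(-1) ≤ θ*v t := mul_le_mul_of_nonneg_left hb2.1 hθ0.le
      have k3 : (1-θ)*ub t ≤ (1-θ)*1 := mul_le_mul_of_nonneg_left hb1.2 (by linarith)
      have k4 : θ*v t ≤ θ*1 := mul_le_mul_of_nonneg_left hb2.2 hθ0.le
      constructor
      · simp only [hvθ]; linarith
      · simp only [hvθ]; linarith
    · intro t ht
      have e1 : ∫ s in t0..t, -(a * vθ s)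
          = (1-θ) * (∫ s in t0..t, -(a*ub s)) + θ * (∫ s in t0..t, -(a*v s)) := by
        have h1' : ∫ s in t0..t, ((1-θ) * (-(a*ub s)) + θ * (-(a*v s)))
            = (1-θ) * (∫ s in t0..t, -(a*ub s)) + θ * (∫ s in t0..t, -(a*v s)) := by
          rw [intervalIntegral.integral_add ((hIIon _ hgub hIt0 ht).const_mul _)
            ((hIIon _ hgv hIt0 ht).const_mul _), intervalIntegral.integral_const_mul,
            intervalIntegral.integral_const_mul]
        rw [← h1']
        refine intervalIntegral.integral_congr fun s _ => ?_
        simp only [hvθ]; ring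
      rw [hyθ]
      simp only
      rw [e1, hx_eq t ht, hz]
      simp only
      ring
    · intro t ht
      obtain ⟨hx1, hx2⟩ := hx_bd t ht
      obtain ⟨hz1', hz2'⟩ := hz_bd t ht
      have k1 : (1-θ)*(-1) ≤ (1-θ)*xb t := mul_le_mul_of_nonneg_left hx1 (by linarith)
      have k2 : θ*(-1) ≤ θ*z t := mul_le_mul_of_nonneg_left hz1' hθ0.le
      have k3 : (1-θ)*xb t ≤ (1-θ)*1 := mul_le_mul_of_nonneg_left hx2 (by linarith)
      have k4 : θ*z t ≤ θ*1 := mul_le_mul_of_nonneg_left hz2' hθ0.le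
      constructor
      · simp only [hyθ]; linarith
      · simp only [hyθ]; linarith
  have hclose : (∫ t in t0..T, |(-(a * vθ t)) - (-(a * ub t))|) ≤ δ := by
    have habs : ∀ t : ℝ, |(-(a * vθ t)) - (-(a * ub t))|
        = θ * |(-(a * v t)) - (-(a * ub t))| := by
      intro t
      rw [← abs_of_nonneg hθ0.le, ← abs_mul]
      congr 1
      simp only [hvθ]; ring
    calc (∫ t in t0..T, |(-(a * vθ t)) - (-(a * ub t))|)
        = ∫ t in t0..T, θ * |(-(a * v t)) - (-(a * ub t))| := by
          refine intervalIntegral.integral_congr fun t _ => habs t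
      _ = θ * M := by rw [intervalIntegral.integral_const_mul, hM]
      _ ≤ δ := hθδ
  have hcost1 : FP3Cost lam t0 T xb ub ≤ FP3Cost lam t0 T yθ vθ := hopt yθ vθ hfeasθ hclose
  have hT : T ∈ Icc t0 T := ⟨htT.le, le_refl _⟩
  have hIccsub : Icc τ1 τ2 ⊆ Icc t0 T := Icc_subset_Icc h1 h2
  have huIcc : uIcc τ1 τ2 = Icc τ1 τ2 := uIcc_of_le h12.le
  -- cost linearity and comparison
  have hcost2 : FP3Cost lam t0 T xb ub ≤ FP3Cost lam t0 T z v := by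
    have hlin : FP3Cost lam t0 T yθ vθ
        = (1-θ) * FP3Cost lam t0 T xb ub + θ * FP3Cost lam t0 T z v := by
      simp only [FP3Cost]
      have h1' : ∫ t in t0..T, ((1-θ) * (-(Real.exp (-(lam*t)) * (xb t + ub t)))
            + θ * (-(Real.exp (-(lam*t)) * (z t + v t))))
          = (1-θ) * (∫ t in t0..T, -(Real.exp (-(lam*t)) * (xb t + ub t)))
            + θ * (∫ t in t0..T, -(Real.exp (-(lam*t)) * (z t + v t))) := by
        rw [intervalIntegral.integral_add ((hIIon _ hf1_int hIt0 hT).const_mul _)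
          ((hIIon _ hf2_int hIt0 hT).const_mul _), intervalIntegral.integral_const_mul,
          intervalIntegral.integral_const_mul]
      rw [← h1']
      refine intervalIntegral.integral_congr fun t _ => ?_
      simp only [hyθ, hvθ]; ring
    have h12' := hcost1
    rw [hlin] at h12'
    have h13 : θ * FP3Cost lam t0 T xb ub ≤ θ * FP3Cost lam t0 T z v := by linarith
    exact (mul_le_mul_iff_right₀ hθ0).1 h13
  have hsplitf : ∀ (f : ℝ → ℝ), IntegrableOn f (Icc t0 T) →
      ∫ t in t0..T, f t
        = (∫ t in t0..τ1, f t) + (∫ t in τ1..τ2, f t) + (∫ t in τ2..T, f t) := by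
    intro f hf
    rw [← intervalIntegral.integral_add_adjacent_intervals (hIIon _ hf hIt0 hτ2)
      (hIIon _ hf hτ2 hT), ← intervalIntegral.integral_add_adjacent_intervals
      (hIIon _ hf hIt0 hτ1) (hIIon _ hf hτ1 hτ2)]
  have hloc : (∫ t in τ1..τ2, -(Real.exp (-(lam*t)) * (xb t + ub t)))
      ≤ ∫ t in τ1..τ2, -(Real.exp (-(lam*t)) * (z t + v t)) := by
    have e1 : ∫ t in t0..τ1, -(Real.exp (-(lam*t)) * (xb t + ub t))
        = ∫ t in t0..τ1, -(Real.exp (-(lam*t)) * (z t + v t)) := by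
      refine intervalIntegral.integral_congr fun t ht => ?_
      rw [uIcc_of_le h1] at ht
      have hvt : v t = ub t := by simp only [hv, if_pos (Or.inl ht.2)]
      rw [hz1 t ht, hvt]
    have e2 : ∫ t in τ2..T, -(Real.exp (-(lam*t)) * (xb t + ub t))
        = ∫ t in τ2..T, -(Real.exp (-(lam*t)) * (z t + v t)) := by
      rw [intervalIntegral.integral_of_le hτ2.2, intervalIntegral.integral_of_le hτ2.2]
      refine setIntegral_congr_fun measurableSet_Ioc fun t ht => ?_
      have hvt : v t = ub t := by simp only [hv, if_pos (Or.inr ht.1)]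
      rw [hz2 t ⟨ht.1.le, ht.2⟩, hvt]
    have h3 := hcost2
    simp only [FP3Cost] at h3
    rw [hsplitf _ hf1_int, hsplitf _ hf2_int] at h3
    linarith
  -- the identity
  set dlt : ℝ → ℝ := fun s => -(a * v s) - (-(a * ub s)) with hdlt
  have hdlt_int : IntegrableOn dlt (Icc τ1 τ2) := by
    have h4 : IntegrableOn dlt (Icc t0 T) := hgv.sub hgub
    exact h4.mono_set hIccsub
  have hzx : ∀ t ∈ Icc τ1 τ2, (∫ s in τ1..t, dlt s) = z t - xb t := by
    intro t ht
    have htI : t ∈ Icc t0 T := hIccsub ht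
    have h4 : ∫ s in τ1..t, dlt s
        = (∫ s in τ1..t, -(a*v s)) - ∫ s in τ1..t, -(a*ub s) :=
      intervalIntegral.integral_sub (hIIon _ hgv hτ1 htI) (hIIon _ hgub hτ1 htI)
    have h5 := hz_add τ1 t hτ1 htI
    have h6 : xb t = xb τ1 + ∫ s in τ1..t, -(a * ub s) := by
      rw [hx_eq t htI, hx_eq τ1 hτ1, ← intervalIntegral.integral_add_adjacent_intervals
        (hIIon _ hgub hIt0 hτ1) (hIIon _ hgub hτ1 htI)]
      ring
    rw [h4, h5, h6, hzτ1, ha1]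
    ring
  have hdlt0 : ∫ s in τ1..τ2, dlt s = 0 := by
    rw [hzx τ2 ⟨h12.le, le_refl _⟩, hzτ2, ha2]; ring
  have hfub := fubini_aux lam τ1 τ2 hlam h12.le dlt hdlt_int
  have hLHSc : ∫ t in τ1..τ2, Real.exp (-(lam*t)) * (∫ s in τ1..t, dlt s)
      = ∫ t in τ1..τ2, Real.exp (-(lam*t)) * (z t - xb t) := by
    refine intervalIntegral.integral_congr fun t ht => ?_
    rw [hzx t (by rwa [huIcc] at ht)]
  set I := ∫ t in τ1..τ2, Real.exp (-(lam*t)) * (z t - xb t) with hI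
  have hdltE_int : IntegrableOn (fun s => dlt s * Real.exp (-(lam*s))) (Icc τ1 τ2) :=
    hdlt_int.mul_continuousOn hE_cont.continuousOn isCompact_Icc
  have hII_de : IntervalIntegrable (fun s => dlt s * Real.exp (-(lam*s))) volume τ1 τ2 :=
    IntegrableOn.intervalIntegrable (by rw [huIcc]; exact hdltE_int)
  have hII_d : IntervalIntegrable dlt volume τ1 τ2 :=
    IntegrableOn.intervalIntegrable (by rw [huIcc]; exact hdlt_int)
  have hRHSc : ∫ s in τ1..τ2, dlt s * ((Real.exp (-(lam*s)) - Real.exp (-(lam*τ2)))/lam)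
      = (1/lam) * (∫ s in τ1..τ2, dlt s * Real.exp (-(lam*s)))
        - (Real.exp (-(lam*τ2))/lam) * (∫ s in τ1..τ2, dlt s) := by
    have h1' : ∫ s in τ1..τ2, ((1/lam) * (dlt s * Real.exp (-(lam*s)))
          - (Real.exp (-(lam*τ2))/lam) * dlt s)
        = (1/lam) * (∫ s in τ1..τ2, dlt s * Real.exp (-(lam*s)))
          - (Real.exp (-(lam*τ2))/lam) * (∫ s in τ1..τ2, dlt s) := by
      rw [intervalIntegral.integral_sub (hII_de.const_mul _) (hII_d.const_mul _),
        intervalIntegral.integral_const_mul, intervalIntegral.integral_const_mul]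
    rw [← h1']
    refine intervalIntegral.integral_congr fun s _ => ?_
    ring
  have hkey : ∫ s in τ1..τ2, dlt s * Real.exp (-(lam*s)) = lam * I := by
    have h7 := hfub
    rw [hLHSc, hRHSc, hdlt0, mul_zero, sub_zero] at h7
    rw [h7]
    field_simp
  have hvubE : ∫ t in τ1..τ2, Real.exp (-(lam*t)) * (v t - ub t) = -((lam/a) * I) := by
    have hpt : ∀ t : ℝ, Real.exp (-(lam*t)) * (v t - ub t)
        = (-(1/a)) * (dlt t * Real.exp (-(lam*t))) := by
      intro t
      simp only [hdlt]
      field_simp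
      ring
    rw [intervalIntegral.integral_congr (fun t _ => hpt t),
      intervalIntegral.integral_const_mul, hkey]
    field_simp
  -- assemble the inequality
  have e3 : ∫ t in τ1..τ2, -(Real.exp (-(lam*t)) * (xb t + ub t))
      = -((∫ t in τ1..τ2, Real.exp (-(lam*t)) * xb t)
          + ∫ t in τ1..τ2, Real.exp (-(lam*t)) * ub t) := by
    rw [← intervalIntegral.integral_add (hIIon _ hexb hτ1 hτ2) (hIIon _ heub hτ1 hτ2),
      ← intervalIntegral.integral_neg]
    refine intervalIntegral.integral_congr fun t _ => by ring
  have e4 : ∫ t in τ1..τ2, -(Real.exp (-(lam*t)) * (z t + v t))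
      = -((∫ t in τ1..τ2, Real.exp (-(lam*t)) * z t)
          + ∫ t in τ1..τ2, Real.exp (-(lam*t)) * v t) := by
    rw [← intervalIntegral.integral_add (hIIon _ hez hτ1 hτ2) (hIIon _ hev hτ1 hτ2),
      ← intervalIntegral.integral_neg]
    refine intervalIntegral.integral_congr fun t _ => by ring
  have e5 : I = (∫ t in τ1..τ2, Real.exp (-(lam*t)) * z t)
      - ∫ t in τ1..τ2, Real.exp (-(lam*t)) * xb t := by
    rw [hI, ← intervalIntegral.integral_sub (hIIon _ hez hτ1 hτ2) (hIIon _ hexb hτ1 hτ2)]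
    refine intervalIntegral.integral_congr fun t _ => by ring
  have e6 : ∫ t in τ1..τ2, Real.exp (-(lam*t)) * (v t - ub t)
      = (∫ t in τ1..τ2, Real.exp (-(lam*t)) * v t)
        - ∫ t in τ1..τ2, Real.exp (-(lam*t)) * ub t := by
    rw [← intervalIntegral.integral_sub (hIIon _ hev hτ1 hτ2) (hIIon _ heub hτ1 hτ2)]
    refine intervalIntegral.integral_congr fun t _ => by ring
  have hfrac : lam/a < 1 := (div_lt_one ha).2 hal
  have hIle : I ≤ (lam/a) * I := by
    rw [e6] at hvubE
    rw [e3, e4] at hloc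
    linarith [e5]
  have hIge : 0 ≤ I := by
    rw [hI]
    exact intervalIntegral.integral_nonneg h12.le
      (fun t ht => mul_nonneg (Real.exp_pos _).le (sub_nonneg.2 (hxb_le_z t ht)))
  have hI0 : I = 0 := by
    refine le_antisymm ?_ hIge
    by_contra h
    push_neg at h
    have h8 : 0 < 1 - lam/a := by linarith
    have h9 := mul_pos h8 h
    have h10 : (1 - lam/a) * I = I - (lam/a) * I := by ring
    linarith
  -- conclude z = xb on [τ1, τ2]
  set W : ℝ → ℝ := fun t => Real.exp (-(lam*t)) * (Qz t - Qx t) with hW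
  have hWc : Continuous W := hE_cont.mul (hQz_cont.sub hQx_cont)
  have hWeq : ∀ t ∈ Icc τ1 τ2, W t = Real.exp (-(lam*t)) * (z t - xb t) := by
    intro t ht
    have htI := hIccsub ht
    simp only [hW]
    rw [← hQz t htI, ← hQx t htI]
  have hWnn : ∀ t ∈ Icc τ1 τ2, 0 ≤ W t := fun t ht => by
    rw [hWeq t ht]
    exact mul_nonneg (Real.exp_pos _).le (sub_nonneg.2 (hxb_le_z t ht))
  have hWint : ∫ t in τ1..τ2, W t = 0 := by
    rw [intervalIntegral.integral_congr (fun t ht => hWeq t (by rwa [huIcc] at ht)), ← hI]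
    exact hI0
  have hW0 := zero_of_integral_zero hWc h12.le hWnn hWint
  have hzxb : ∀ t ∈ Icc τ1 τ2, xb t = z t := by
    intro t ht
    rcases eq_or_lt_of_le ht.1 with h | h
    · rw [← h, ha1, hzτ1]
    · rcases eq_or_lt_of_le ht.2 with h' | h'
      · rw [h', ha2, hzτ2]
      · have h9 := hW0 t ⟨h, h'⟩
        rw [hWeq t ht] at h9
        rcases mul_eq_zero.1 h9 with h10 | h10
        · exact absurd h10 (Real.exp_pos _).ne'
        · linarith [sub_eq_zero.1 h10]
  -- final conclusions
  have htm : (τ1+τ2)/2 ∈ Ioo τ1 τ2 := ⟨by linarith, by linarith⟩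
  have hmids1 : s1 ≤ (τ1+τ2)/2 := by
    simp only [hs1]
    have := hcL; simp only [hL] at this; linarith
  have hmids2 : (τ1+τ2)/2 ≤ s2 := by
    simp only [hs2]
    have := hcL; simp only [hL] at this; linarith
  have hmid : xb ((τ1+τ2)/2) = -1 + a*c := by
    rw [hzxb _ ⟨htm.1.le, htm.2.le⟩, hz_flat _ ⟨hmids1, hmids2⟩]
  have hlt1 : xb ((τ1+τ2)/2) < 1 := (hin _ htm).2
  have hac2 : a * c < 2 := by linarith
  have hcv : c = L/2 := by
    rcases le_total (L/2) (2/a) with hm | hm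
    · rw [hc]; exact min_eq_left hm
    · exfalso
      have h10 : c = 2/a := by rw [hc]; exact min_eq_right hm
      have : a * c = 2 := by rw [h10]; field_simp
      linarith
  have hL4 : τ2 - τ1 < 4/a := by
    have h11 : a * (L/2) < 2 := by rw [← hcv]; exact hac2
    rw [lt_div_iff₀ ha]
    have h12'' : a * (L/2) * 2 = (τ2 - τ1) * a := by rw [hL]; ring
    linarith
  refine ⟨hL4, fun t ht => ?_, fun t ht => ?_⟩
  · have hts1 : t ∈ Icc τ1 s1 := by
      refine ⟨ht.1, ?_⟩
      simp only [hs1, hcv, hL]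
      linarith [ht.2]
    have htm2 : t ∈ Icc τ1 τ2 := ⟨ht.1, by linarith [ht.2]⟩
    rw [hzxb t htm2, hz_up t hts1]
  · have hts2 : t ∈ Icc s2 τ2 := by
      refine ⟨?_, ht.2⟩
      simp only [hs2, hcv, hL]
      linarith [ht.1.le]
    have htm2 : t ∈ Icc τ1 τ2 := ⟨by linarith [ht.1.le], ht.2⟩
    rw [hzxb t htm2, hz_down t hts2]
    ring
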